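/- Let c ≥ 0 and β < 0. Then f_{c,β} is positive and convex on (0, ∞), f_{c,β}(λ) → ∞ as λ → 0⁺, and f_{c,β}(λ) → ∞ as λ → ∞. -/

import Mathlib

open Set Filter Real

lemma convexOn_inv_of_aux (u u' u'' : ℝ → ℝ)
    (hu : ∀ x ∈ Set.Ioi (0:ℝ), HasDerivAt u (u' x) x)
    (hu' : ∀ x ∈ Set.Ioi (0:ℝ), HasDerivAt u' (u'' x) x)
    (hupos : ∀ x ∈ Set.Ioi (0:ℝ), 0 < u x)
    (hkey : ∀ x ∈ Set.Ioi (0:ℝ), 0 ≤ 2 * (u' x)^2 - u x * u'' x) :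
    ConvexOn ℝ (Set.Ioi (0:ℝ)) (fun l => (u l)⁻¹) := by
  apply convexOn_of_hasDerivWithinAt2_nonneg (f' := fun l => -(u' l) / (u l)^2)
    (f'' := fun l => (u l * (2 * (u' l)^2 - u l * u'' l)) / ((u l)^2)^2) (convex_Ioi 0)
  · exact fun x hx => ((hu x hx).inv (hupos x hx).ne').continuousAt.continuousWithinAt
  · simp only [interior_Ioi]
    intro x hx
    exact (((hu x hx).inv (hupos x hx).ne')).hasDerivWithinAt
  · simp only [interior_Ioi]
    intro x hx
    have hne : (u x)^2 ≠ 0 := pow_ne_zero _ (hupos x hx).ne'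
    have h := ((hu' x hx).neg.div ((hu x hx).pow 2) hne)
    have : (-(u'' x) * (u x)^2 - -(u' x) * ((2:ℕ) * u x ^ (2-1) * u' x)) / ((u x)^2)^2
        = (u x * (2 * (u' x)^2 - u x * u'' x)) / ((u x)^2)^2 := by
      push_cast; ring_nf
    simp only [Pi.pow_apply, Pi.neg_apply] at h
    rw [this] at h
    exact h.hasDerivWithinAt
  · simp only [interior_Ioi]
    intro x hx
    exact div_nonneg (mul_nonneg (hupos x hx).le (hkey x hx)) (by positivity)

lemma convexOn_div_of_aux (u u' u'' : ℝ → ℝ)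
    (hu : ∀ x ∈ Set.Ioi (0:ℝ), HasDerivAt u (u' x) x)
    (hu' : ∀ x ∈ Set.Ioi (0:ℝ), HasDerivAt u' (u'' x) x)
    (hupos : ∀ x ∈ Set.Ioi (0:ℝ), 0 < u x)
    (hkey : ∀ x ∈ Set.Ioi (0:ℝ), 0 ≤ 2*x*(u' x)^2 - 2*u x*u' x - x*u x*u'' x) :
    ConvexOn ℝ (Set.Ioi (0:ℝ)) (fun l => l / u l) := by
  apply convexOn_of_hasDerivWithinAt2_nonneg
    (f' := fun l => (u l - l * u' l) / (u l)^2)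
    (f'' := fun l => (u l * (2*l*(u' l)^2 - 2*u l*u' l - l*u l*u'' l)) / ((u l)^2)^2) (convex_Ioi 0)
  · intro x hx
    exact (((hasDerivAt_id x).div (hu x hx) (hupos x hx).ne')).continuousAt.continuousWithinAt
  · simp only [interior_Ioi]
    intro x hx
    have h := (hasDerivAt_id x).div (hu x hx) (hupos x hx).ne'
    have : (1 * u x - id x * u' x) / u x ^ 2 = (u x - x * u' x) / (u x)^2 := by
      simp [id]
    rw [this] at h
    exact h.hasDerivWithinAt
  · simp only [interior_Ioi]
    intro x hx
    have hne : (u x)^2 ≠ 0 := pow_ne_zero _ (hupos x hx).ne'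
    have hnum : HasDerivAt (fun l => u l - l * u' l) (u' x - (1 * u' x + x * u'' x)) x :=
      (hu x hx).sub ((hasDerivAt_id x).mul (hu' x hx))
    have h := hnum.div ((hu x hx).pow 2) hne
    have : ((u' x - (1 * u' x + x * u'' x)) * u x ^ 2 - (u x - x * u' x) * ((2:ℕ) * u x ^ (2-1) * u' x)) / (u x ^ 2) ^ 2
        = (u x * (2*x*(u' x)^2 - 2*u x*u' x - x*u x*u'' x)) / ((u x)^2)^2 := by
      push_cast; ring_nf
    simp only [Pi.pow_apply, Pi.neg_apply] at h
    rw [this] at h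
    exact h.hasDerivWithinAt
  · simp only [interior_Ioi]
    intro x hx
    exact div_nonneg (mul_nonneg (hupos x hx).le (hkey x hx)) (by positivity)

lemma key_exp_ineq {x : ℝ} (hx : 0 ≤ x) :
    2 * (Real.exp x - 1) ≤ x * (Real.exp x + 1) := by
  have hg : ∀ y : ℝ, HasDerivAt (fun t : ℝ => t * (Real.exp t + 1) - 2 * Real.exp t + 2)
      (1 * (Real.exp y + 1) + y * Real.exp y - 2 * Real.exp y) y := by
    intro y
    exact (((hasDerivAt_id y).mul ((Real.hasDerivAt_exp y).add_const 1)).sub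
      ((Real.hasDerivAt_exp y).const_mul 2)).add_const 2
  have hmono : Monotone (fun t : ℝ => t * (Real.exp t + 1) - 2 * Real.exp t + 2) := by
    apply monotone_of_deriv_nonneg (fun y => (hg y).differentiableAt)
    intro y
    rw [(hg y).deriv]
    have h1 : -y + 1 ≤ Real.exp (-y) := Real.add_one_le_exp (-y)
    have h2 : Real.exp (-y) * Real.exp y = 1 := by rw [← Real.exp_add]; simp
    nlinarith [Real.exp_pos y, mul_le_mul_of_nonneg_right h1 (Real.exp_pos y).le]
  have := hmono hx
  simp only [Real.exp_zero] at this
  nlinarith [this]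

lemma exp_hasDerivAt (x : ℝ) :
    HasDerivAt (fun l : ℝ => Real.exp (2 * Real.pi * l))
      (Real.exp (2 * Real.pi * x) * (2 * Real.pi)) x := by
  have h : HasDerivAt (fun l : ℝ => 2 * Real.pi * l) (2 * Real.pi) x := by
    simpa using (hasDerivAt_id x).const_mul (2 * Real.pi)
  exact h.exp

lemma convexOn_piece1 : ConvexOn ℝ (Set.Ioi (0:ℝ)) (fun l : ℝ => (2*l)⁻¹) := by
  apply convexOn_inv_of_aux (fun l => 2*l) (fun _ => 2) (fun _ => 0)
  · intro x _; simpa using (hasDerivAt_id x).const_mul (2:ℝ)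
  · intro x _; exact hasDerivAt_const x 2
  · intro x hx; have : (0:ℝ) < x := hx; linarith
  · intro x _; norm_num

lemma convexOn_piece2 :
    ConvexOn ℝ (Set.Ioi (0:ℝ)) (fun l : ℝ => (2*l*(Real.exp (2*Real.pi*l) - 1))⁻¹) := by
  apply convexOn_inv_of_aux (fun l => 2*l*(Real.exp (2*Real.pi*l) - 1))
    (fun l => 2*(Real.exp (2*Real.pi*l) - 1) + 4*Real.pi*l*Real.exp (2*Real.pi*l))
    (fun l => 8*Real.pi*Real.exp (2*Real.pi*l) + 8*Real.pi^2*l*Real.exp (2*Real.pi*l))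
  · intro x _
    have h2l : HasDerivAt (fun l : ℝ => 2*l) 2 x := by
      simpa using (hasDerivAt_id x).const_mul (2:ℝ)
    have h := h2l.mul ((exp_hasDerivAt x).sub_const 1)
    refine h.congr_deriv ?_
    ring
  · intro x _
    have hA := ((exp_hasDerivAt x).sub_const 1).const_mul (2:ℝ)
    have h4 : HasDerivAt (fun l : ℝ => 4*Real.pi*l) (4*Real.pi) x := by
      simpa using (hasDerivAt_id x).const_mul (4*Real.pi)
    have hB := h4.mul (exp_hasDerivAt x)
    have h := hA.add hB
    refine h.congr_deriv ?_
    ring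
  · intro x hx
    have hx0 : (0:ℝ) < x := hx
    have hE1 : 1 < Real.exp (2*Real.pi*x) := by
      rw [Real.one_lt_exp_iff]
      positivity
    nlinarith [hE1, hx0]
  · intro x hx
    have hx0 : (0:ℝ) < x := hx
    have hE1 : 1 < Real.exp (2*Real.pi*x) := by
      rw [Real.one_lt_exp_iff]; positivity
    set E := Real.exp (2*Real.pi*x) with hEdef
    have hπ := Real.pi_pos
    have hkey : 2 * (2*(E - 1) + 4*Real.pi*x*E)^2
        - (2*x*(E - 1)) * (8*Real.pi*E + 8*Real.pi^2*x*E)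
        = 8*(E-1)^2 + 16*(Real.pi*x*(E*(E-1))) + 16*(Real.pi^2*x^2*E^2) + 16*(Real.pi^2*x^2*E) := by
      ring
    rw [hkey]
    have t1 : 0 ≤ (E-1)^2 := sq_nonneg _
    have t2 : 0 ≤ Real.pi*x*(E*(E-1)) :=
      mul_nonneg (mul_nonneg hπ.le hx0.le) (mul_nonneg (by linarith) (by linarith))
    have t3 : 0 ≤ Real.pi^2*x^2*E^2 := by
      apply mul_nonneg (by positivity); nlinarith
    have t4 : 0 ≤ Real.pi^2*x^2*E := by
      apply mul_nonneg (by positivity); linarith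
    linarith

lemma convexOn_piece3 :
    ConvexOn ℝ (Set.Ioi (0:ℝ)) (fun l : ℝ => l / (2*(Real.exp (2*Real.pi*l) - 1))) := by
  apply convexOn_div_of_aux (fun l => 2*(Real.exp (2*Real.pi*l) - 1))
    (fun l => 4*Real.pi*Real.exp (2*Real.pi*l))
    (fun l => 8*Real.pi^2*Real.exp (2*Real.pi*l))
  · intro x _
    have h := ((exp_hasDerivAt x).sub_const 1).const_mul (2:ℝ)
    refine h.congr_deriv ?_
    ring
  · intro x _
    have h := (exp_hasDerivAt x).const_mul (4*Real.pi)
    refine h.congr_deriv ?_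
    ring
  · intro x hx
    have hx0 : (0:ℝ) < x := hx
    have hE1 : 1 < Real.exp (2*Real.pi*x) := by
      rw [Real.one_lt_exp_iff]; positivity
    linarith
  · intro x hx
    have hx0 : (0:ℝ) < x := hx
    have hE1 : 1 < Real.exp (2*Real.pi*x) := by
      rw [Real.one_lt_exp_iff]; positivity
    have hπ := Real.pi_pos
    have hk := key_exp_ineq (show (0:ℝ) ≤ 2*Real.pi*x by positivity)
    set E := Real.exp (2*Real.pi*x) with hEdef
    have hid : 2*x*(4*Real.pi*E)^2 - 2*(2*(E - 1))*(4*Real.pi*E)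
        - x*(2*(E - 1))*(8*Real.pi^2*E)
        = (16*Real.pi*E) * (Real.pi*x*(E+1) - (E-1)) := by ring
    rw [hid]
    apply mul_nonneg
    · have : 0 < E := by linarith
      positivity
    · nlinarith [hk]

lemma convexOn_congr_aux {s : Set ℝ} {f g : ℝ → ℝ} (hf : ConvexOn ℝ s f)
    (h : ∀ x ∈ s, f x = g x) : ConvexOn ℝ s g := by
  refine ⟨hf.1, fun x hx y hy a b ha hb hab => ?_⟩
  rw [← h x hx, ← h y hy, ← h _ (hf.1 hx hy ha hb hab)]
  exact hf.2 hx hy ha hb hab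

/-- `ρ_c(λ) = (e^{2πλ} - 1)/(e^{2πλ + c/2} - 1)`. -/
noncomputable def rhoC (c lam : ℝ) : ℝ :=
  (Real.exp (2 * Real.pi * lam) - 1) / (Real.exp (2 * Real.pi * lam + c / 2) - 1)

/-- `f_{c,β}(λ) = (1 - 4βλ²)/(2λ ρ_c(λ))`. -/
noncomputable def fCB (c β lam : ℝ) : ℝ := (1 - 4 * β * lam ^ 2) / (2 * lam * rhoC c lam)

/-- Lemma 4.1(i) (lemma `prf`(i)): for `β < 0`, `f_{c,β}` is positive and convex on `(0,∞)`,
and tends to `∞` both as `λ → 0⁺` and as `λ → ∞`. -/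
theorem rotating_waves_stmt_6 (c β : ℝ) (hc : 0 ≤ c) (hβ : β < 0) :
    (∀ lam ∈ Set.Ioi (0 : ℝ), 0 < fCB c β lam) ∧
    ConvexOn ℝ (Set.Ioi (0 : ℝ)) (fCB c β) ∧
    Filter.Tendsto (fCB c β) (nhdsWithin 0 (Set.Ioi 0)) Filter.atTop ∧
    Filter.Tendsto (fCB c β) Filter.atTop Filter.atTop := by
  have hD1 : 1 ≤ Real.exp (c/2) := Real.one_le_exp (by linarith)
  have hDpos : 0 < Real.exp (c/2) := Real.exp_pos _
  -- basic facts for each lam > 0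
  have hfacts : ∀ x : ℝ, x ∈ Set.Ioi (0:ℝ) →
      1 < Real.exp (2*Real.pi*x) ∧ 1 < Real.exp (2*Real.pi*x + c/2) := by
    intro x hx
    have hx0 : (0:ℝ) < x := hx
    constructor
    · rw [Real.one_lt_exp_iff]; positivity
    · rw [Real.one_lt_exp_iff]; positivity
  -- positivity
  have hpos : ∀ lam ∈ Set.Ioi (0:ℝ), 0 < fCB c β lam := by
    intro x hx
    have hx0 : (0:ℝ) < x := hx
    obtain ⟨hE1, hED1⟩ := hfacts x hx
    have hρ : 0 < rhoC c x := div_pos (by linarith) (by linarith)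
    exact div_pos (by nlinarith [sq_nonneg x]) (by positivity)
  -- lower bound
  have hge : ∀ x ∈ Set.Ioi (0:ℝ), (1 - 4*β*x^2)/(2*x) ≤ fCB c β x := by
    intro x hx
    have hx0 : (0:ℝ) < x := hx
    obtain ⟨hE1, hED1⟩ := hfacts x hx
    have hρ : 0 < rhoC c x := div_pos (by linarith) (by linarith)
    have hρle : rhoC c x ≤ 1 := by
      rw [rhoC, div_le_one (by linarith)]
      rw [Real.exp_add]
      nlinarith [Real.exp_pos (2*Real.pi*x)]
    have hnum : (0:ℝ) ≤ 1 - 4*β*x^2 := by nlinarith [sq_nonneg x]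
    apply div_le_div_of_nonneg_left hnum (by positivity)
    nlinarith [hρle, hρ, hx0]
  refine ⟨hpos, ?_, ?_, ?_⟩
  · -- convexity
    have hlin : ConvexOn ℝ (Set.Ioi (0:ℝ)) (fun l : ℝ => (-2*β)*l) := by
      have h := (convexOn_id (convex_Ioi (0:ℝ))).smul (show (0:ℝ) ≤ -2*β by linarith)
      simpa [smul_eq_mul] using h
    have h1 : ConvexOn ℝ (Set.Ioi (0:ℝ)) (fun l : ℝ => (2*l)⁻¹ + (-2*β)*l) :=
      convexOn_piece1.add hlin
    have h1s := h1.smul hDpos.le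
    have h2s := convexOn_piece2.smul (show (0:ℝ) ≤ Real.exp (c/2) - 1 by linarith)
    have h3s := convexOn_piece3.smul
      (show (0:ℝ) ≤ (-4*β)*(Real.exp (c/2) - 1) by nlinarith)
    have hg := h1s.add (h2s.add h3s)
    apply convexOn_congr_aux hg
    intro x hx
    have hx0 : (0:ℝ) < x := hx
    obtain ⟨hE1, hED1⟩ := hfacts x hx
    have hEne : Real.exp (2*Real.pi*x) - 1 ≠ 0 := by linarith
    have hEDne : Real.exp (2*Real.pi*x + c/2) - 1 ≠ 0 := by linarith
    simp only [smul_eq_mul, Pi.add_apply]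
    rw [fCB, rhoC, Real.exp_add]
    field_simp
    have hEne' : Real.exp (2*x*Real.pi) - 1 ≠ 0 := by rw [show 2*x*Real.pi = 2*Real.pi*x by ring]; exact hEne
    field_simp
    ring
  · -- limit at 0⁺
    have hbound : ∀ᶠ l in nhdsWithin 0 (Set.Ioi 0), (2*l)⁻¹ ≤ fCB c β l := by
      filter_upwards [self_mem_nhdsWithin] with l hl
      have hl0 : (0:ℝ) < l := hl
      refine le_trans ?_ (hge l hl)
      rw [inv_eq_one_div, div_le_div_iff₀ (by linarith) (by linarith)]
      nlinarith [mul_nonneg (mul_nonneg (neg_nonneg.2 hβ.le) (sq_nonneg l)) hl0.le]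
    have htends : Filter.Tendsto (fun l : ℝ => (2*l)⁻¹) (nhdsWithin 0 (Set.Ioi 0)) Filter.atTop := by
      have h2 : Filter.Tendsto (fun l : ℝ => 2*l) (nhdsWithin 0 (Set.Ioi 0))
          (nhdsWithin 0 (Set.Ioi 0)) := by
        apply tendsto_nhdsWithin_of_tendsto_nhds_of_eventually_within
        · have h : Filter.Tendsto (fun l : ℝ => 2*l) (nhds 0) (nhds (2*0)) :=
            (continuous_const.mul continuous_id).tendsto 0
          simpa using h.mono_left nhdsWithin_le_nhds
        · filter_upwards [self_mem_nhdsWithin] with l hl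
          exact mul_pos two_pos (Set.mem_Ioi.mp hl)
      exact tendsto_inv_nhdsGT_zero.comp h2
    exact tendsto_atTop_mono' _ hbound htends
  · -- limit at ∞
    have hbound : ∀ᶠ l in Filter.atTop, (-2*β)*l ≤ fCB c β l := by
      filter_upwards [eventually_gt_atTop (0:ℝ)] with l hl
      refine le_trans ?_ (hge l hl)
      rw [le_div_iff₀ (by linarith : (0:ℝ) < 2*l)]
      nlinarith
    have htends : Filter.Tendsto (fun l : ℝ => (-2*β)*l) Filter.atTop Filter.atTop :=
      Filter.Tendsto.const_mul_atTop (by linarith) tendsto_id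
    exact tendsto_atTop_mono' _ hbound htends
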